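/- In the algebra B = F₂[X,Y]/(X²,Y⁴), the subalgebras A = span{1, X} and A' = span{1, Y²} are isomorphic as F₂-algebras, but there is no F₂-algebra automorphism α of B with α(A) = A'. -/

import Mathlib

open Polynomial

set_option maxHeartbeats 1000000
set_option synthInstance.maxHeartbeats 400000
set_option maxRecDepth 4000

noncomputable section Stmt19Aux

namespace Stmt19

abbrev F : Type := ZMod 2
abbrev Pre : Type := MvPolynomial (Fin 2) F
abbrev Iid : Ideal Pre :=
  Ideal.span {(MvPolynomial.X 0 : Pre) ^ 2, (MvPolynomial.X 1 : Pre) ^ 4}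
abbrev B : Type := Pre ⧸ Iid

def xx : B := Ideal.Quotient.mk _ (MvPolynomial.X 0)
def yy : B := Ideal.Quotient.mk _ (MvPolynomial.X 1)

lemma xx_sq : xx ^ 2 = 0 := by
  rw [xx, ← map_pow, Ideal.Quotient.eq_zero_iff_mem]
  exact Ideal.subset_span (Or.inl rfl)

lemma yy_sq_sq : (yy ^ 2) ^ 2 = 0 := by
  rw [yy, ← pow_mul, ← map_pow, Ideal.Quotient.eq_zero_iff_mem]
  exact Ideal.subset_span (Or.inr rfl)

/-- First test hom: `X₀ ↦ ε`, `X₁ ↦ 0` into the dual numbers. -/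
def φ1 : B →ₐ[F] DualNumber F :=
  Ideal.Quotient.liftₐ _ (MvPolynomial.aeval ![(DualNumber.eps : DualNumber F), 0]) (by
    intro a ha
    have hle : Iid ≤
        RingHom.ker (MvPolynomial.aeval (R := F) ![(DualNumber.eps : DualNumber F), 0]) := by
      rw [Ideal.span_le]
      rintro p (rfl | rfl) <;>
        simp only [SetLike.mem_coe, RingHom.mem_ker, map_pow, MvPolynomial.aeval_X,
          Matrix.cons_val_zero, Matrix.cons_val_one, Matrix.head_cons]
      · rw [pow_two, DualNumber.eps_mul_eps]
      · norm_num
    exact RingHom.mem_ker.mp (hle ha))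

lemma φ1_xx : φ1 xx = DualNumber.eps := by
  rw [xx, φ1, Ideal.Quotient.liftₐ_apply]
  erw [Ideal.Quotient.lift_mk]
  simp only [AlgHom.coe_toRingHom, MvPolynomial.aeval_X, Matrix.cons_val_zero]

/-- Second test hom: `X₀ ↦ 0`, `X₁ ↦ t` into `F[t]/(t⁴)`. -/
abbrev P4 : Type := Polynomial F ⧸ Ideal.span {(X : Polynomial F) ^ 4}

def tP4 : P4 := Ideal.Quotient.mk _ X

lemma tP4_pow4 : tP4 ^ 4 = 0 := by
  rw [tP4, ← map_pow, Ideal.Quotient.eq_zero_iff_mem]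
  exact Ideal.subset_span rfl

def φ2 : B →ₐ[F] P4 :=
  Ideal.Quotient.liftₐ _ (MvPolynomial.aeval ![0, tP4]) (by
    intro a ha
    have hle : Iid ≤ RingHom.ker (MvPolynomial.aeval (R := F) ![0, tP4]) := by
      rw [Ideal.span_le]
      rintro p (rfl | rfl) <;>
        simp only [SetLike.mem_coe, RingHom.mem_ker, map_pow, MvPolynomial.aeval_X,
          Matrix.cons_val_zero, Matrix.cons_val_one, Matrix.head_cons]
      · norm_num
      · exact tP4_pow4
    exact RingHom.mem_ker.mp (hle ha))

lemma φ2_yy : φ2 yy = tP4 := by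
  rw [yy, φ2, Ideal.Quotient.liftₐ_apply]
  erw [Ideal.Quotient.lift_mk]
  simp only [AlgHom.coe_toRingHom, MvPolynomial.aeval_X, Matrix.cons_val_one, Matrix.head_cons,
    Matrix.cons_val_zero]

lemma indep_P4 (a b : F) (h : (C a + C b * X ^ 2 : Polynomial F) ∈
    Ideal.span {(X : Polynomial F) ^ 4}) : a = 0 ∧ b = 0 := by
  rw [Ideal.mem_span_singleton] at h
  have hp0 : (C a + C b * X ^ 2 : Polynomial F) = 0 := by
    by_contra hne
    have hdeg := Polynomial.natDegree_le_of_dvd h hne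
    rw [natDegree_X_pow] at hdeg
    have h2 : (C a + C b * X ^ 2 : Polynomial F).natDegree ≤ 2 := by
      compute_degree
    omega
  constructor
  · have := congrArg (fun p => Polynomial.coeff p 0) hp0
    simpa using this
  · have := congrArg (fun p => Polynomial.coeff p 2) hp0
    simpa using this

lemma algebraMap_P4 (a : F) : algebraMap F P4 a
    = Ideal.Quotient.mk (Ideal.span {(X : Polynomial F) ^ 4}) (C a) := rfl

lemma indep_yy2 (a b : F) (h : algebraMap F B a + algebraMap F B b * yy ^ 2 = 0) :
    a = 0 ∧ b = 0 := by
  have h2 := congrArg φ2 h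
  rw [map_add, map_mul, map_pow, AlgHom.commutes, AlgHom.commutes, map_zero, φ2_yy] at h2
  rw [algebraMap_P4, algebraMap_P4, tP4, ← map_pow, ← map_mul, ← map_add] at h2
  exact indep_P4 a b (Ideal.Quotient.eq_zero_iff_mem.mp h2)

lemma algebraMap_DN (a : F) : algebraMap F (DualNumber F) a = TrivSqZeroExt.inl a := by
  rw [TrivSqZeroExt.algebraMap_eq_inl]

lemma indep_xx (a b : F) (h : algebraMap F B a + algebraMap F B b * xx = 0) :
    a = 0 ∧ b = 0 := by
  have h2 := congrArg φ1 h
  rw [map_add, map_mul, AlgHom.commutes, AlgHom.commutes, map_zero, φ1_xx,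
    algebraMap_DN, algebraMap_DN] at h2
  constructor
  · have h3 := congrArg TrivSqZeroExt.fst h2
    rw [TrivSqZeroExt.fst_add, TrivSqZeroExt.fst_mul, TrivSqZeroExt.fst_inl,
      TrivSqZeroExt.fst_inl, DualNumber.fst_eps, mul_zero, add_zero,
      TrivSqZeroExt.fst_zero] at h3
    exact h3
  · have h3 := congrArg TrivSqZeroExt.snd h2
    rw [TrivSqZeroExt.snd_add, TrivSqZeroExt.snd_mul, TrivSqZeroExt.snd_inl,
      TrivSqZeroExt.snd_inl, DualNumber.snd_eps, TrivSqZeroExt.fst_inl,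
      DualNumber.fst_eps, TrivSqZeroExt.snd_zero] at h3
    simpa using h3

/-- Every polynomial evaluated at a square-zero element is affine in it. -/
lemma aeval_sq_zero {t : B} (ht : t ^ 2 = 0) (p : Polynomial F) :
    Polynomial.aeval t p = algebraMap F B ((p %ₘ (X ^ 2)).coeff 0)
      + algebraMap F B ((p %ₘ (X ^ 2)).coeff 1) * t := by
  have hmonic : (X ^ 2 : Polynomial F).Monic := monic_X_pow 2
  conv_lhs => rw [← modByMonic_add_div p (X ^ 2)]
  have hdeg : (p %ₘ (X ^ 2)).natDegree ≤ 1 := by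
    have hlt := degree_modByMonic_lt p hmonic
    rw [degree_X_pow] at hlt
    exact natDegree_le_of_degree_le (Order.le_of_lt_succ hlt)
  have hr := eq_X_add_C_of_natDegree_le_one hdeg
  rw [map_add, map_mul, map_pow, aeval_X, ht, zero_mul, add_zero]
  conv_lhs => rw [hr]
  rw [map_add, map_mul, aeval_C, aeval_C, aeval_X, add_comm]

lemma ker_aeval {t : B} (ht : t ^ 2 = 0)
    (hind : ∀ a b : F, algebraMap F B a + algebraMap F B b * t = 0 → a = 0 ∧ b = 0) :
    RingHom.ker (Polynomial.aeval t : Polynomial F →ₐ[F] B)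
      = Ideal.span {(X : Polynomial F) ^ 2} := by
  apply le_antisymm
  · intro p hp
    rw [RingHom.mem_ker, aeval_sq_zero ht] at hp
    obtain ⟨h0, h1⟩ := hind _ _ hp
    have hmonic : (X ^ 2 : Polynomial F).Monic := monic_X_pow 2
    have hdeg : (p %ₘ (X ^ 2)).natDegree ≤ 1 := by
      have hlt := degree_modByMonic_lt p hmonic
      rw [degree_X_pow] at hlt
      exact natDegree_le_of_degree_le (Order.le_of_lt_succ hlt)
    have hr0 : p %ₘ (X ^ 2) = 0 := by
      rw [eq_X_add_C_of_natDegree_le_one hdeg, h0, h1]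
      simp
    rw [Ideal.mem_span_singleton]
    exact (modByMonic_eq_zero_iff_dvd hmonic).mp hr0
  · rw [Ideal.span_le]
    rintro p rfl
    rw [SetLike.mem_coe, RingHom.mem_ker, map_pow, aeval_X, ht]

/-- `F[T]/(T²) ≃ₐ adjoin {t}` for a "free" square-zero `t`. -/
def adjoinEquiv {t : B} (ht : t ^ 2 = 0)
    (hind : ∀ a b : F, algebraMap F B a + algebraMap F B b * t = 0 → a = 0 ∧ b = 0) :
    (Polynomial F ⧸ Ideal.span {(X : Polynomial F) ^ 2}) ≃ₐ[F]
      (Algebra.adjoin F {t}) :=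
  ((Ideal.quotientEquivAlgOfEq F (by
      rw [← ker_aeval ht hind, AlgHom.ker_rangeRestrict])).trans
    (Ideal.quotientKerAlgEquivOfSurjective
      (AlgHom.rangeRestrict_surjective (Polynomial.aeval t)))).trans
    (Subalgebra.equivOfEq _ _ (Algebra.adjoin_singleton_eq_range_aeval F t).symm)

lemma eps_ne_zero : (DualNumber.eps : DualNumber F) ≠ 0 := by
  intro h
  have h3 := congrArg TrivSqZeroExt.snd h
  rw [DualNumber.snd_eps, TrivSqZeroExt.snd_zero] at h3
  exact one_ne_zero h3

lemma eps_ne_one : (DualNumber.eps : DualNumber F) ≠ 1 := by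
  intro h
  have h3 := congrArg TrivSqZeroExt.snd h
  rw [DualNumber.snd_eps, TrivSqZeroExt.snd_one] at h3
  exact one_ne_zero h3

lemma not_square_eps : ∀ w : DualNumber F, w ^ 2 ≠ DualNumber.eps := by
  intro w h
  have hs := congrArg TrivSqZeroExt.snd h
  rw [pow_two, TrivSqZeroExt.snd_mul] at hs
  rw [DualNumber.snd_eps] at hs
  rw [op_smul_eq_smul, smul_eq_mul] at hs
  have hh : ∀ c : F, c + c = 0 := by decide
  rw [hh (w.fst * w.snd)] at hs
  exact one_ne_zero hs.symm

lemma one_ne_zero_B : (1 : B) ≠ 0 := by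
  intro h
  have := congrArg φ1 h
  rw [map_one, map_zero] at this
  exact one_ne_zero this

lemma two_zero_B : (2 : B) = 0 := by
  rw [← map_ofNat (algebraMap F B) 2, show (2 : F) = 0 by decide, map_zero]

end Stmt19

end Stmt19Aux

open Stmt19 in
/-- In `B = F₂[X,Y]/(X², Y⁴)`, the subalgebras `F₂[x] = span{1, x}` and
`F₂[y²] = span{1, y²}` are isomorphic as `F₂`-algebras, but no algebra automorphism of `B`
carries one to the other. -/
theorem stmt19 :
    let Bb := MvPolynomial (Fin 2) (ZMod 2) ⧸
      Ideal.span {(MvPolynomial.X 0 : MvPolynomial (Fin 2) (ZMod 2)) ^ 2,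
        (MvPolynomial.X 1 : MvPolynomial (Fin 2) (ZMod 2)) ^ 4}
    let x : Bb := Ideal.Quotient.mk _ (MvPolynomial.X 0)
    let y : Bb := Ideal.Quotient.mk _ (MvPolynomial.X 1)
    let A := Algebra.adjoin (ZMod 2) {x}
    let A' := Algebra.adjoin (ZMod 2) {y ^ 2}
    Nonempty (A ≃ₐ[ZMod 2] A')
    ∧ ¬ ∃ α : Bb ≃ₐ[ZMod 2] Bb, Subalgebra.map α.toAlgHom A = A' := by
  intro Bb x y A A'
  constructor
  · exact ⟨(adjoinEquiv xx_sq indep_xx).symm.trans (adjoinEquiv yy_sq_sq indep_yy2)⟩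
  · rintro ⟨α, hα⟩
    have hxA : x ∈ A := Algebra.subset_adjoin rfl
    have hαx : α x ∈ A' := by
      rw [← hα]
      exact ⟨x, hxA, rfl⟩
    have hA' : A' = (Polynomial.aeval (yy ^ 2) : Polynomial F →ₐ[F] B).range :=
      Algebra.adjoin_singleton_eq_range_aeval F (yy ^ 2)
    rw [hA'] at hαx
    obtain ⟨p, hp0⟩ := hαx
    have hp : Polynomial.aeval (yy ^ 2) p = α x := hp0
    rw [aeval_sq_zero yy_sq_sq p] at hp
    set a : F := (p %ₘ (X ^ 2)).coeff 0 with ha_def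
    set b : F := (p %ₘ (X ^ 2)).coeff 1 with hb_def
    have hx2 : x ^ 2 = (0 : B) := xx_sq
    have hcases : ∀ c : F, c = 0 ∨ c = 1 := by decide
    obtain (ha | ha) := hcases a <;> obtain (hb | hb) := hcases b
    · -- α x = 0
      rw [ha, hb, map_zero, zero_mul, add_zero] at hp
      have hx0 : x = (0 : B) := α.injective (by rw [← hp, map_zero])
      have : (DualNumber.eps : DualNumber F) = 0 := by
        rw [← φ1_xx, show xx = (0 : B) from hx0, map_zero]
      exact eps_ne_zero this
    · -- α x = y²
      rw [ha, hb, map_zero, map_one, zero_add, one_mul] at hp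
      have hx : x = (α.symm yy) ^ 2 := by
        have := congrArg α.symm hp
        rw [AlgEquiv.symm_apply_apply, map_pow] at this
        exact this.symm
      have : (φ1 (α.symm yy)) ^ 2 = DualNumber.eps := by
        rw [← map_pow, ← show xx = (α.symm yy : B) ^ 2 from hx, φ1_xx]
      exact not_square_eps _ this
    · -- α x = 1
      rw [ha, hb, map_zero, map_one, zero_mul, add_zero] at hp
      have hx1 : x = (1 : B) := α.injective (by rw [← hp, map_one])
      have : (DualNumber.eps : DualNumber F) = 1 := by
        rw [← φ1_xx, show xx = (1 : B) from hx1, map_one]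
      exact eps_ne_one this
    · -- α x = 1 + y²
      rw [ha, hb, map_one, one_mul] at hp
      have hsq0 : (α x) ^ 2 = 0 := by
        rw [← map_pow, hx2, map_zero]
      have hone : ((1 : B) + yy ^ 2) ^ 2 = 1 := by
        have e : ((1 : B) + yy ^ 2) ^ 2 = 1 + 2 * yy ^ 2 + (yy ^ 2) ^ 2 := by ring
        rw [e, yy_sq_sq, two_zero_B]
        ring
      have : (1 : B) = 0 := by
        rw [← hone, show ((1 : B) + yy ^ 2) = α x from hp, hsq0]
      exact one_ne_zero_B this
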